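/- Let Ω be a pre-morphism into a semiring (A,+,×,0_A,1_A) (with a fixed weight matrix W), and let the hypotheses of the disjoint-union and join lemmas hold: T₀,…,T_{p-1} pairwise disjoint subsets of V_H forming (after splitting T₀ = T_p ⊎ T_{p+1}) a union of e-connected components C₁,…,C_q of a contraction H_{k+1} of H, with index sets I_j. Then for pairwise disjoint S₀, S₁,…,S_{p-1} ⊆ V_G: Ω_W(R^{S₁,…,S_{p-1},S₀}_{T₁,…,T_{p-1},T₀}) = Σ over partitions S_p ⊎ S_{p+1} = S₀ with (S₁,…,S_{p+1}) ⪯_R (T₁,…,T_{p+1}) of Π_{j=1}^{q} Ω_W(R^{(S₁,…,S_{p+1})_{I_j}}_{(T₁,…,T_{p+1})_{I_j}}), where Σ and Π denote iterated semiring addition and multiplication. -/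

import Mathlib

/-- `R^S_T` over an explicit domain `D`: the set of `R`-morphisms `f` from the induced
subgraph of `G` on `D` to `H` such that `f(S i) ⊆ T i` for every index `i`. -/
def RSetOn {VG VH XG XH ι : Type*} (lG : VG → VG → XG) (lH : VH → VH → XH)
    (R : Set (XG × XH)) (D : Set VG) (S : ι → Set VG) (T : ι → Set VH) :
    Set (↥D → VH) :=
  {f | (∀ u v : ↥D, (lG ↑u ↑v, lH (f u) (f v)) ∈ R) ∧
       ∀ i, ∀ u : ↥D, (u : VG) ∈ S i → f u ∈ T i}

/-- `S ⪯_R T` (`R`-feasibility): whenever the contraction label of `(T_i, T_{i'})` is not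
`e` (i.e. all pairs in `T_i × T_{i'}` carry the same label `x` in `H`), every pair in
`S_i × S_{i'}` has its `G`-label related to `x` by `R`. -/
def Feasible {VG VH XG XH ι : Type*} (lG : VG → VG → XG) (lH : VH → VH → XH)
    (R : Set (XG × XH)) (S : ι → Set VG) (T : ι → Set VH) : Prop :=
  ∀ i i' : ι, ∀ x : XH, (∀ u ∈ T i, ∀ v ∈ T i', lH u v = x) →
    ∀ u ∈ S i, ∀ v ∈ S i', (lG u v, x) ∈ R

set_option linter.unusedSectionVars false
set_option maxHeartbeats 1600000

open Function Set
section aux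
variable {VG VH A : Type*} [Semiring A]
variable (Ω : (D : Set VG) → Set (↥D → VH) → A)

lemma omega_congr' {D D' : Set VG} (h : D' = D) (F : Set (↥D' → VH)) :
    Ω D {f : ↥D → VH | f ∘ Set.inclusion h.subset ∈ F} = Ω D' F := by
  subst h; congr 1

lemma omega_biUnion (hΩ0 : ∀ D : Set VG, Ω D ∅ = 0)
    (hΩadd : ∀ (D : Set VG) (F₁ F₂ : Set (↥D → VH)), Disjoint F₁ F₂ →
      Ω D (F₁ ∪ F₂) = Ω D F₁ + Ω D F₂)
    (D : Set VG) {ι : Type*} (s : Finset ι) (F : ι → Set (↥D → VH))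
    (hdisj : ∀ x ∈ s, ∀ y ∈ s, x ≠ y → Disjoint (F x) (F y)) :
    Ω D (⋃ x ∈ s, F x) = ∑ x ∈ s, Ω D (F x) := by
  classical
  induction s using Finset.induction_on with
  | empty => simp [hΩ0]
  | @insert a s ha ih =>
    rw [Finset.set_biUnion_insert, hΩadd, ih, Finset.sum_insert ha]
    · intro x hx y hy hxy
      exact hdisj x (Finset.mem_insert_of_mem hx) y (Finset.mem_insert_of_mem hy) hxy
    · simp only [Set.disjoint_iUnion_right]
      intro x hx
      exact hdisj a (Finset.mem_insert_self a s) x (Finset.mem_insert_of_mem hx)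
        (fun h => ha (h ▸ hx))

lemma omega_prod
    (hΩmul : ∀ (D₁ D₂ : Set VG), Disjoint D₁ D₂ → ∀ T₁ T₂ : Set VH, Disjoint T₁ T₂ →
      ∀ (F₁ : Set (↥D₁ → VH)) (F₂ : Set (↥D₂ → VH)),
      (∀ f ∈ F₁, ∀ u, f u ∈ T₁) → (∀ f ∈ F₂, ∀ u, f u ∈ T₂) →
      Ω (D₁ ∪ D₂)
          {f | f ∘ Set.inclusion (Set.subset_union_left (s := D₁) (t := D₂)) ∈ F₁ ∧
               f ∘ Set.inclusion (Set.subset_union_right (s := D₁) (t := D₂)) ∈ F₂} =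
        Ω D₁ F₁ * Ω D₂ F₂) :
    ∀ n : ℕ, 1 ≤ n → ∀ (Dm : Fin n → Set VG), Pairwise (onFun Disjoint Dm) →
    ∀ (Tt : Fin n → Set VH), Pairwise (onFun Disjoint Tt) →
    ∀ (F : (j : Fin n) → Set (↥(Dm j) → VH)),
    (∀ j, ∀ f ∈ F j, ∀ u, f u ∈ Tt j) →
    Ω (⋃ j, Dm j) {f | ∀ j, f ∘ Set.inclusion (Set.subset_iUnion Dm j) ∈ F j}
      = (List.ofFn fun j => Ω (Dm j) (F j)).prod := by
  intro n
  induction n with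
  | zero => intro h; exact absurd h (by omega)
  | succ n ih =>
    intro _ Dm hDdisj Tt hTdisj F hmaps
    rcases Nat.eq_zero_or_pos n with hn | hn
    · subst hn
      have hU : Dm 0 = ⋃ j, Dm j := by
        ext x; simp only [Set.mem_iUnion]
        refine ⟨fun h => ⟨0, h⟩, fun ⟨j, h⟩ => ?_⟩
        obtain rfl : j = (0 : Fin 1) := Fin.ext (by omega)
        exact h
      have hc := omega_congr' Ω hU (F 0)
      have hset : {f : ↥(⋃ j, Dm j) → VH |
          ∀ j, f ∘ Set.inclusion (Set.subset_iUnion Dm j) ∈ F j} =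
          {f : ↥(⋃ j, Dm j) → VH | f ∘ Set.inclusion hU.subset ∈ F 0} := by
        ext f
        simp only [Set.mem_setOf_eq]
        constructor
        · intro hf; exact hf 0
        · intro hf j
          obtain rfl : j = (0 : Fin 1) := Fin.ext (by omega)
          exact hf
      rw [hset, hc]
      simp
    · -- n ≥ 1
      set D₁ : Set VG := ⋃ j : Fin n, Dm j.castSucc with hD₁
      set D₂ : Set VG := Dm (Fin.last n) with hD₂
      set T₁ : Set VH := ⋃ j : Fin n, Tt j.castSucc with hT₁
      set F₁ : Set (↥D₁ → VH) :=
        {g | ∀ j : Fin n, g ∘ Set.inclusion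
            (Set.subset_iUnion (fun j : Fin n => Dm j.castSucc) j) ∈ F j.castSucc} with hF₁
      have hDdisj' : Disjoint D₁ D₂ := by
        rw [hD₁, Set.disjoint_iUnion_left]
        intro j
        exact hDdisj (by simp [Fin.ext_iff, Fin.castSucc, Fin.last]; omega)
      have hTdisj' : Disjoint T₁ (Tt (Fin.last n)) := by
        rw [hT₁, Set.disjoint_iUnion_left]
        intro j
        exact hTdisj (by simp [Fin.ext_iff, Fin.castSucc, Fin.last]; omega)
      have hmaps₁ : ∀ g ∈ F₁, ∀ u, g u ∈ T₁ := by
        intro g hg u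
        obtain ⟨j, hj⟩ : ∃ j : Fin n, (u : VG) ∈ Dm j.castSucc := Set.mem_iUnion.1 u.2
        exact Set.mem_iUnion.2 ⟨j, hmaps j.castSucc _ (hg j) ⟨u.1, hj⟩⟩
      have hmul := hΩmul D₁ D₂ hDdisj' T₁ (Tt (Fin.last n)) hTdisj' F₁ (F (Fin.last n))
        hmaps₁ (hmaps (Fin.last n))
      have hih := ih hn (fun j => Dm j.castSucc)
        (fun a b hab => hDdisj ((Fin.castSucc_injective n).ne hab))
        (fun j => Tt j.castSucc)
        (fun a b hab => hTdisj ((Fin.castSucc_injective n).ne hab))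
        (fun j => F j.castSucc) (fun j => hmaps j.castSucc)
      have hU : D₁ ∪ D₂ = ⋃ j, Dm j := by
        ext x
        simp only [hD₁, hD₂, Set.mem_union, Set.mem_iUnion]
        constructor
        · rintro (⟨j, hj⟩ | h)
          · exact ⟨j.castSucc, hj⟩
          · exact ⟨Fin.last n, h⟩
        · rintro ⟨j, hj⟩
          rcases Fin.eq_castSucc_or_eq_last j with ⟨j', rfl⟩ | rfl
          · exact Or.inl ⟨j', hj⟩
          · exact Or.inr hj
      have hc := omega_congr' Ω hU
        ({f : ↥(D₁ ∪ D₂) → VH |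
            f ∘ Set.inclusion (Set.subset_union_left (s := D₁) (t := D₂)) ∈ F₁ ∧
            f ∘ Set.inclusion (Set.subset_union_right (s := D₁) (t := D₂)) ∈ F (Fin.last n)})
      have hset : {f : ↥(⋃ j, Dm j) → VH |
          ∀ j, f ∘ Set.inclusion (Set.subset_iUnion Dm j) ∈ F j} =
          {f : ↥(⋃ j, Dm j) → VH | f ∘ Set.inclusion hU.subset ∈
            {g : ↥(D₁ ∪ D₂) → VH |
              g ∘ Set.inclusion (Set.subset_union_left (s := D₁) (t := D₂)) ∈ F₁ ∧
              g ∘ Set.inclusion (Set.subset_union_right (s := D₁) (t := D₂)) ∈ F (Fin.last n)}} := by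
        ext f
        simp only [Set.mem_setOf_eq, hF₁]
        constructor
        · intro hf
          exact ⟨fun j => hf j.castSucc, hf (Fin.last n)⟩
        · rintro ⟨h₁, h₂⟩ j
          rcases Fin.eq_castSucc_or_eq_last j with ⟨j', rfl⟩ | rfl
          · exact h₁ j'
          · exact h₂
      rw [hset, hc, hmul, hih]
      rw [List.ofFn_succ']
      simp
      rfl
end aux

/-- The recurrence of the fine-grained algorithm: for a pre-morphism `Ω` into a semiring
`A` (additive on disjoint unions, multiplicative on joins with disjoint domains and
disjoint codomains, sending `∅` to `0`), and for `T₁,…,T_{p-1},T_p,T_{p+1}` pairwise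
disjoint nonempty subsets of `V_H` forming a union of `e`-connected components
`I₁,…,I_q` of a contraction of `H` (with `T₀ = T_p ⊎ T_{p+1}`), and pairwise disjoint
`S₀, S₁,…,S_{p-1} ⊆ V_G`:
`Ω(R^{S₁,…,S_{p-1},S₀}_{T₁,…,T_{p-1},T₀})` equals the sum over partitions
`S_p ⊎ S_{p+1} = S₀` (parametrized by `S_p ⊆ S₀`, with `S_{p+1} = S₀ \ S_p`) that are
`R`-feasible, of the product over components `j` of
`Ω(R^{(S₁,…,S_{p+1})_{I_j}}_{(T₁,…,T_{p+1})_{I_j}})`. Indices: `Sum.inl i ↦ (Sᵢ, Tᵢ)`,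
`Sum.inr true ↦ (S_p, T_p)`, `Sum.inr false ↦ (S_{p+1}, T_{p+1})`. -/
theorem stmt_17 {VG VH XG XH A : Type*} [Finite VG] [Semiring A]
    (lG : VG → VG → XG) (lH : VH → VH → XH) (R : Set (XG × XH))
    (Ω : (D : Set VG) → Set (↥D → VH) → A)
    (hΩ0 : ∀ D : Set VG, Ω D ∅ = 0)
    (hΩadd : ∀ (D : Set VG) (F₁ F₂ : Set (↥D → VH)), Disjoint F₁ F₂ →
      Ω D (F₁ ∪ F₂) = Ω D F₁ + Ω D F₂)
    (hΩmul : ∀ (D₁ D₂ : Set VG), Disjoint D₁ D₂ → ∀ T₁ T₂ : Set VH, Disjoint T₁ T₂ →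
      ∀ (F₁ : Set (↥D₁ → VH)) (F₂ : Set (↥D₂ → VH)),
      (∀ f ∈ F₁, ∀ u, f u ∈ T₁) → (∀ f ∈ F₂, ∀ u, f u ∈ T₂) →
      Ω (D₁ ∪ D₂)
          {f | f ∘ Set.inclusion (Set.subset_union_left (s := D₁) (t := D₂)) ∈ F₁ ∧
               f ∘ Set.inclusion (Set.subset_union_right (s := D₁) (t := D₂)) ∈ F₂} =
        Ω D₁ F₁ * Ω D₂ F₂)
    {k q : ℕ} (hq : 1 ≤ q)
    (Aset : Fin k → Set VG) (Bset : Fin k → Set VH)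
    (S₀ : Set VG) (T₀ Tp Tp1 : Set VH)
    (hBne : ∀ i, (Bset i).Nonempty) (hTpne : Tp.Nonempty) (hTp1ne : Tp1.Nonempty)
    (hBdisj : Pairwise (Function.onFun Disjoint Bset))
    (hBTp : ∀ i, Disjoint (Bset i) T₀)
    (hT : Disjoint Tp Tp1) (hTU : Tp ∪ Tp1 = T₀)
    (hAdisj : Pairwise (Function.onFun Disjoint Aset))
    (hAS0 : ∀ i, Disjoint (Aset i) S₀)
    (I : Fin q → Set (Fin k ⊕ Bool))
    (hpart : ∀ i : Fin k ⊕ Bool, ∃! j : Fin q, i ∈ I j)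
    (hcross : ∀ j j' : Fin q, j ≠ j' → ∀ i ∈ I j, ∀ i' ∈ I j', ∃ x : XH,
      ∀ u ∈ Sum.elim Bset (fun b : Bool => bif b then Tp else Tp1) i,
      ∀ v ∈ Sum.elim Bset (fun b : Bool => bif b then Tp else Tp1) i', lH u v = x)
    (hconn : ∀ j : Fin q, ∀ i ∈ I j, ∀ i' ∈ I j,
      Relation.ReflTransGen (fun a b : Fin k ⊕ Bool => a ∈ I j ∧ b ∈ I j ∧
        (¬ (∃ x : XH, ∀ u ∈ Sum.elim Bset (fun c : Bool => bif c then Tp else Tp1) a,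
              ∀ v ∈ Sum.elim Bset (fun c : Bool => bif c then Tp else Tp1) b,
              lH u v = x) ∨
         ¬ (∃ x : XH, ∀ u ∈ Sum.elim Bset (fun c : Bool => bif c then Tp else Tp1) b,
              ∀ v ∈ Sum.elim Bset (fun c : Bool => bif c then Tp else Tp1) a,
              lH u v = x))) i i') :
    Ω (S₀ ∪ ⋃ i, Aset i)
        (RSetOn lG lH R (S₀ ∪ ⋃ i, Aset i)
          (Sum.elim Aset fun _ : Unit => S₀) (Sum.elim Bset fun _ : Unit => T₀)) =
      ∑ᶠ Sp ∈ {Sp : Set VG | Sp ⊆ S₀ ∧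
          Feasible lG lH R
            (Sum.elim Aset fun b : Bool => bif b then Sp else S₀ \ Sp)
            (Sum.elim Bset fun b : Bool => bif b then Tp else Tp1)},
        (List.ofFn fun j : Fin q =>
          Ω (⋃ i : ↥(I j),
              Sum.elim Aset (fun b : Bool => bif b then Sp else S₀ \ Sp) ↑i)
            (RSetOn lG lH R
              (⋃ i : ↥(I j),
                Sum.elim Aset (fun b : Bool => bif b then Sp else S₀ \ Sp) ↑i)
              (fun i : ↥(I j) =>
                Sum.elim Aset (fun b : Bool => bif b then Sp else S₀ \ Sp) ↑i)
              (fun i : ↥(I j) =>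
                Sum.elim Bset (fun b : Bool => bif b then Tp else Tp1) ↑i))).prod := by
  classical
  let D : Set VG := S₀ ∪ ⋃ i, Aset i
  let T' : Fin k ⊕ Bool → Set VH := Sum.elim Bset fun b : Bool => bif b then Tp else Tp1
  let S' : Set VG → Fin k ⊕ Bool → Set VG :=
    fun Sp => Sum.elim Aset fun b : Bool => bif b then Sp else S₀ \ Sp
  let FF : Set VG → Set (↥D → VH) := fun Sp => RSetOn lG lH R D (S' Sp) T'
  let g : Set VG → A := fun Sp =>
    (List.ofFn fun j : Fin q =>
      Ω (⋃ i : ↥(I j), S' Sp ↑i)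
        (RSetOn lG lH R (⋃ i : ↥(I j), S' Sp ↑i)
          (fun i : ↥(I j) => S' Sp ↑i) (fun i : ↥(I j) => T' ↑i))).prod
  let P : Set (Set VG) := {Sp | Sp ⊆ S₀}
  let Pf : Set (Set VG) := {Sp | Sp ⊆ S₀ ∧ Feasible lG lH R (S' Sp) T'}
  have hS0D : S₀ ⊆ D := Set.subset_union_left
  have hTpsub : Tp ⊆ T₀ := hTU ▸ Set.subset_union_left
  have hTp1sub : Tp1 ⊆ T₀ := hTU ▸ Set.subset_union_right
  have hS'D : ∀ Sp, Sp ⊆ S₀ → ∀ i, S' Sp i ⊆ D := by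
    rintro Sp hSp (i | b)
    · exact (Set.subset_iUnion Aset i).trans Set.subset_union_right
    · cases b
      · exact fun u hu => Or.inl hu.1
      · exact fun u hu => Or.inl (hSp hu)
  have hT'disj : Pairwise (Function.onFun Disjoint T') := by
    rintro (i | b) (i' | b') hne
    · exact hBdisj fun h => hne (by rw [h])
    · cases b'
      · exact (hBTp i).mono_right hTp1sub
      · exact (hBTp i).mono_right hTpsub
    · cases b
      · exact ((hBTp i').mono_right hTp1sub).symm
      · exact ((hBTp i').mono_right hTpsub).symm
    · cases b <;> cases b'
      · exact absurd rfl hne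
      · exact hT.symm
      · exact hT
      · exact absurd rfl hne
  have hiuniq : ∀ i : Fin k ⊕ Bool, ∀ j j' : Fin q, i ∈ I j → i ∈ I j' → j = j' := by
    intro i j j' hj hj'
    obtain ⟨j0, _, hu⟩ := hpart i
    rw [hu j hj, hu j' hj']
  -- Step A : cover
  have hcover : RSetOn lG lH R D (Sum.elim Aset fun _ : Unit => S₀)
      (Sum.elim Bset fun _ : Unit => T₀) = ⋃ Sp ∈ P, FF Sp := by
    ext f
    simp only [Set.mem_iUnion]
    constructor
    · intro hf
      refine ⟨{u : VG | ∃ h : u ∈ D, u ∈ S₀ ∧ f ⟨u, h⟩ ∈ Tp}, fun u hu => hu.2.1, ?_⟩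
      refine ⟨hf.1, ?_⟩
      rintro (i | b) u hu
      · exact hf.2 (Sum.inl i) u hu
      · cases b
        · -- u ∈ S₀ \ Sp
          have h0 : f u ∈ T₀ := hf.2 (Sum.inr ()) u hu.1
          rw [← hTU] at h0
          rcases h0 with h0 | h0
          · exact absurd ⟨u.2, hu.1, h0⟩ hu.2
          · exact h0
        · obtain ⟨h, _, hfu⟩ := hu
          exact hfu
    · rintro ⟨Sp, hSpP, hf⟩
      refine ⟨hf.1, ?_⟩
      rintro (i | u') u hu
      · exact hf.2 (Sum.inl i) u hu
      · by_cases hc : (u : VG) ∈ Sp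
        · exact hTpsub (hf.2 (Sum.inr true) u hc)
        · exact hTp1sub (hf.2 (Sum.inr false) u ⟨hu, hc⟩)
  -- disjointness of the FF pieces
  have hkey : ∀ Sp₁, Sp₁ ⊆ S₀ → ∀ Sp₂, ∀ f, f ∈ FF Sp₁ → f ∈ FF Sp₂ →
      ∀ u, u ∈ Sp₁ → u ∈ S₀ \ Sp₂ → False := by
    intro Sp₁ h1 Sp₂ f hf1 hf2 u hu hud
    have hD' : u ∈ D := Or.inl (h1 hu)
    have e1 : f ⟨u, hD'⟩ ∈ Tp := hf1.2 (Sum.inr true) ⟨u, hD'⟩ hu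
    have e2 : f ⟨u, hD'⟩ ∈ Tp1 := hf2.2 (Sum.inr false) ⟨u, hD'⟩ hud
    exact Set.disjoint_left.1 hT e1 e2
  have hFFdisj : ∀ Sp₁ ∈ P, ∀ Sp₂ ∈ P, Sp₁ ≠ Sp₂ → Disjoint (FF Sp₁) (FF Sp₂) := by
    intro Sp₁ h1 Sp₂ h2 hne
    rw [Set.disjoint_left]
    intro f hf1 hf2
    have : ¬(Sp₁ ⊆ Sp₂ ∧ Sp₂ ⊆ Sp₁) := fun ⟨a, b⟩ => hne (Set.Subset.antisymm a b)
    rcases not_and_or.1 this with h | h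
    · obtain ⟨u, hu1, hu2⟩ := Set.not_subset.1 h
      exact hkey Sp₁ h1 Sp₂ f hf1 hf2 u hu1 ⟨h1 hu1, hu2⟩
    · obtain ⟨u, hu1, hu2⟩ := Set.not_subset.1 h
      exact hkey Sp₂ h2 Sp₁ f hf2 hf1 u hu1 ⟨h2 hu1, hu2⟩
  have hPfin : P.Finite := Set.toFinite _
  have hPffin : Pf.Finite := Set.toFinite _
  -- vanishing of infeasible pieces
  have hvanish : ∀ Sp, Sp ⊆ S₀ → Sp ∉ Pf → Ω D (FF Sp) = 0 := by
    intro Sp hSp hnf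
    have hemp : FF Sp = ∅ := by
      rw [Set.eq_empty_iff_forall_notMem]
      intro f hf
      refine hnf ⟨hSp, ?_⟩
      intro i i' x hx u hu v hv
      have hui : u ∈ D := hS'D Sp hSp i hu
      have hvi : v ∈ D := hS'D Sp hSp i' hv
      have h1 : f ⟨u, hui⟩ ∈ T' i := hf.2 i ⟨u, hui⟩ hu
      have h2 : f ⟨v, hvi⟩ ∈ T' i' := hf.2 i' ⟨v, hvi⟩ hv
      have h3 := hf.1 ⟨u, hui⟩ ⟨v, hvi⟩
      rwa [hx _ h1 _ h2] at h3
    rw [hemp, hΩ0]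
  -- feasible pieces factor as products
  have hfeas : ∀ Sp ∈ Pf, Ω D (FF Sp) = g Sp := by
    rintro Sp ⟨hSp, hFe⟩
    set Dm : Fin q → Set VG := fun j => ⋃ i : ↥(I j), S' Sp ↑i with hDm
    set Fj : (j : Fin q) → Set (↥(Dm j) → VH) := fun j =>
      RSetOn lG lH R (Dm j) (fun i : ↥(I j) => S' Sp ↑i) (fun i : ↥(I j) => T' ↑i) with hFj
    set Tt : Fin q → Set VH := fun j => ⋃ i : ↥(I j), T' ↑i with hTt
    have hS'disj : Pairwise (Function.onFun Disjoint (S' Sp)) := by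
      rintro (i | b) (i' | b') hne
      · exact hAdisj fun h => hne (by rw [h])
      · cases b'
        · exact (hAS0 i).mono_right Set.diff_subset
        · exact (hAS0 i).mono_right hSp
      · cases b
        · exact ((hAS0 i').mono_right Set.diff_subset).symm
        · exact ((hAS0 i').mono_right hSp).symm
      · cases b <;> cases b'
        · exact absurd rfl hne
        · exact disjoint_sdiff_self_left
        · exact disjoint_sdiff_self_right
        · exact absurd rfl hne
    have hDmdisj : Pairwise (Function.onFun Disjoint Dm) := by
      intro j j' hne
      rw [Function.onFun, hDm]
      simp only [Set.disjoint_iUnion_left, Set.disjoint_iUnion_right]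
      intro i' i
      exact hS'disj fun h => hne (hiuniq i.1 j j' i.2 (h ▸ i'.2))
    have hTtdisj : Pairwise (Function.onFun Disjoint Tt) := by
      intro j j' hne
      rw [Function.onFun, hTt]
      simp only [Set.disjoint_iUnion_left, Set.disjoint_iUnion_right]
      intro i' i
      exact hT'disj fun h => hne (hiuniq i.1 j j' i.2 (h ▸ i'.2))
    have hmapsj : ∀ j, ∀ f ∈ Fj j, ∀ u, f u ∈ Tt j := by
      intro j f hf u
      obtain ⟨i, hi⟩ := Set.mem_iUnion.1 u.2
      exact Set.mem_iUnion.2 ⟨i, hf.2 i u hi⟩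
    have hcovD : ∀ u ∈ D, ∃ i, u ∈ S' Sp i := by
      rintro u (hu | hu)
      · by_cases hc : u ∈ Sp
        · exact ⟨Sum.inr true, hc⟩
        · exact ⟨Sum.inr false, ⟨hu, hc⟩⟩
      · obtain ⟨i, hi⟩ := Set.mem_iUnion.1 hu
        exact ⟨Sum.inl i, hi⟩
    have hU : (⋃ j, Dm j) = D := by
      ext u
      simp only [Set.mem_iUnion, hDm]
      constructor
      · rintro ⟨j, i, hi⟩
        exact hS'D Sp hSp i.1 hi
      · intro hu
        obtain ⟨i, hi⟩ := hcovD u hu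
        obtain ⟨j, hj, _⟩ := hpart i
        exact ⟨j, ⟨i, hj⟩, hi⟩
    have hmain : FF Sp = {f : ↥D → VH | f ∘ Set.inclusion hU.subset ∈
        {g0 : ↥(⋃ j, Dm j) → VH |
          ∀ j, g0 ∘ Set.inclusion (Set.subset_iUnion Dm j) ∈ Fj j}} := by
      ext f
      simp only [Set.mem_setOf_eq]
      constructor
      · intro hf j
        have r : ↥(Dm j) → ↥D :=
          Set.inclusion hU.subset ∘ Set.inclusion (Set.subset_iUnion Dm j)
        refine ⟨fun u v => hf.1 (Set.inclusion hU.subset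
            (Set.inclusion (Set.subset_iUnion Dm j) u))
            (Set.inclusion hU.subset (Set.inclusion (Set.subset_iUnion Dm j) v)),
          fun i u hu => hf.2 i.1 (Set.inclusion hU.subset
            (Set.inclusion (Set.subset_iUnion Dm j) u)) hu⟩
      · intro hf
        have himg : ∀ (i : Fin k ⊕ Bool) (u : ↥D), (u : VG) ∈ S' Sp i → f u ∈ T' i := by
          intro i u hu
          obtain ⟨j, hj, _⟩ := hpart i
          have huD : (u : VG) ∈ Dm j := Set.mem_iUnion.2 ⟨⟨i, hj⟩, hu⟩
          exact (hf j).2 ⟨i, hj⟩ ⟨u.1, huD⟩ hu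
        refine ⟨?_, himg⟩
        intro u v
        obtain ⟨i, hu⟩ := hcovD u.1 u.2
        obtain ⟨i', hv⟩ := hcovD v.1 v.2
        obtain ⟨j, hj, _⟩ := hpart i
        obtain ⟨j', hj', _⟩ := hpart i'
        by_cases hjj : j = j'
        · subst hjj
          have h1 : (u : VG) ∈ Dm j := Set.mem_iUnion.2 ⟨⟨i, hj⟩, hu⟩
          have h2 : (v : VG) ∈ Dm j := Set.mem_iUnion.2 ⟨⟨i', hj'⟩, hv⟩
          exact (hf j).1 ⟨u.1, h1⟩ ⟨v.1, h2⟩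
        · obtain ⟨x, hx⟩ := hcross j j' hjj i hj i' hj'
          have e1 : f u ∈ T' i := himg i u hu
          have e2 : f v ∈ T' i' := himg i' v hv
          have hl : lH (f u) (f v) = x := hx _ e1 _ e2
          rw [hl]
          exact hFe i i' x hx u.1 hu v.1 hv
    calc Ω D (FF Sp)
        = Ω (⋃ j, Dm j) {g0 : ↥(⋃ j, Dm j) → VH |
            ∀ j, g0 ∘ Set.inclusion (Set.subset_iUnion Dm j) ∈ Fj j} := by
          rw [hmain]; exact omega_congr' Ω hU _
      _ = (List.ofFn fun j => Ω (Dm j) (Fj j)).prod :=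
          omega_prod Ω hΩmul q hq Dm hDmdisj Tt hTtdisj Fj hmapsj
      _ = g Sp := rfl
  -- assemble
  have hsub' : hPffin.toFinset ⊆ hPfin.toFinset := by
    intro x hx
    rw [Set.Finite.mem_toFinset] at hx ⊢
    exact hx.1
  calc Ω D (RSetOn lG lH R D (Sum.elim Aset fun _ : Unit => S₀)
        (Sum.elim Bset fun _ : Unit => T₀))
      = Ω D (⋃ Sp ∈ hPfin.toFinset, FF Sp) := by
        rw [hcover]
        congr 1
        ext f
        simp only [Set.mem_iUnion, Set.Finite.mem_toFinset]
    _ = ∑ Sp ∈ hPfin.toFinset, Ω D (FF Sp) :=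
        omega_biUnion Ω hΩ0 hΩadd D hPfin.toFinset FF
          (fun x hx y hy hxy =>
            hFFdisj x (hPfin.mem_toFinset.1 hx) y (hPfin.mem_toFinset.1 hy) hxy)
    _ = ∑ Sp ∈ hPffin.toFinset, Ω D (FF Sp) := by
        refine (Finset.sum_subset hsub' ?_).symm
        intro x hx hnx
        exact hvanish x (hPfin.mem_toFinset.1 hx) (fun h => hnx (hPffin.mem_toFinset.2 h))
    _ = ∑ Sp ∈ hPffin.toFinset, g Sp :=
        Finset.sum_congr rfl (fun Sp hSp => hfeas Sp (hPffin.mem_toFinset.1 hSp))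
    _ = ∑ᶠ Sp ∈ Pf, g Sp := (finsum_mem_eq_finite_toFinset_sum g hPffin).symm
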